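/- For polynomials f₁(z) ∈ ℂ[z] and f₂(z*) ∈ ℂ[z*] inside Pol(ℂ)_q, one has □(f₂(z*)·f₁(z)) = (∂^{(r)}f₂/∂z*) · q^{-2}(1 − (1+q^{-2})z*z + q^{-2}z*²z²) · (∂^{(l)}f₁/∂z). -/

import Mathlib

inductive PolRel (q : ℝ) : FreeAlgebra ℂ (Fin 2) → FreeAlgebra ℂ (Fin 2) → Prop
  | rel : PolRel q (FreeAlgebra.ι ℂ 1 * FreeAlgebra.ι ℂ 0)
      ((q ^ 2 : ℂ) • (FreeAlgebra.ι ℂ 0 * FreeAlgebra.ι ℂ 1) + ((1 : ℂ) - (q ^ 2 : ℂ)) • 1)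

abbrev PolC (q : ℝ) : Type := RingQuot (PolRel q)

noncomputable def Pz (q : ℝ) : PolC q := RingQuot.mkAlgHom ℂ (PolRel q) (FreeAlgebra.ι ℂ 0)

noncomputable def Pw (q : ℝ) : PolC q := RingQuot.mkAlgHom ℂ (PolRel q) (FreeAlgebra.ι ℂ 1)

/-- for `f₁ = f₁(z) ∈ ℂ[z]` and `f₂ = f₂(z*) ∈ ℂ[z*]` inside `Pol(ℂ)_q`,
`□(f₂·f₁) = (∂⁽ʳ⁾f₂/∂z*) · q⁻²(1 - (1+q⁻²)z*z + q⁻²z*²z²) · (∂⁽ˡ⁾f₁/∂z)`,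
where `□f = q² (∂⁽ʳ⁾/∂z*)(∂⁽ʳ⁾f/∂z)(1-zz*)²`.

Setup as in the differential calculus: `d f = (∂⁽ˡ⁾f/∂z, ∂⁽ˡ⁾f/∂z*)`, left
multiplication on `Ω¹` acts through `φ` (`φ(z)=q⁻²z`, `φ(z*)=q²z*`), and right
partials are `∂⁽ʳ⁾f/∂x = σ(∂⁽ˡ⁾f/∂x)` with `σ(z)=q²z`, `σ(z*)=q⁻²z*`. -/
theorem box_on_wick_products (q : ℝ) (hq0 : 0 < q) (hq1 : q < 1)
    (φ σ : PolC q →ₐ[ℂ] PolC q)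
    (hφz : φ (Pz q) = ((q : ℂ) ^ (-2 : ℤ)) • Pz q)
    (hφw : φ (Pw q) = ((q : ℂ) ^ (2 : ℤ)) • Pw q)
    (hσz : σ (Pz q) = ((q : ℂ) ^ (2 : ℤ)) • Pz q)
    (hσw : σ (Pw q) = ((q : ℂ) ^ (-2 : ℤ)) • Pw q)
    (d : PolC q →ₗ[ℂ] PolC q × PolC q)
    (hdz : d (Pz q) = (1, 0))
    (hdw : d (Pw q) = (0, 1))
    (hLeib : ∀ f g : PolC q,
      d (f * g) = ((d f).1 * g + φ f * (d g).1, (d f).2 * g + φ f * (d g).2)) :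
    ∀ p r : Polynomial ℂ,
      let f₁ : PolC q := Polynomial.aeval (Pz q) p
      let f₂ : PolC q := Polynomial.aeval (Pw q) r
      ((q : ℂ) ^ 2) • (σ ((d (σ ((d (f₂ * f₁)).1))).2) * (1 - Pz q * Pw q) ^ 2) =
        σ ((d f₂).2) *
          (((q : ℂ) ^ (-2 : ℤ)) •
            (1 - ((1 : ℂ) + (q : ℂ) ^ (-2 : ℤ)) • (Pw q * Pz q) +
              ((q : ℂ) ^ (-2 : ℤ)) • (Pw q ^ 2 * Pz q ^ 2))) *
          (d f₁).1 := by
  intro p r f₁ f₂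
  set c : ℂ := (q : ℂ) with hcdef
  have hc : c ≠ 0 := Complex.ofReal_ne_zero.mpr hq0.ne'
  set Z : PolC q := Pz q with hZdef
  set W : PolC q := Pw q with hWdef
  -- zpow facts
  have hz2 : c ^ (2 : ℤ) = c ^ 2 := by
    rw [show (2 : ℤ) = ((2 : ℕ) : ℤ) from rfl, zpow_natCast]
  have hbinv : c ^ (-2 : ℤ) = (c ^ 2)⁻¹ := by
    rw [zpow_neg, hz2]
  have hb : c ^ 2 * c ^ (-2 : ℤ) = 1 := by
    rw [hbinv]; field_simp
  -- the defining relation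
  have hrel : W * Z = (c ^ 2) • (Z * W) + ((1 : ℂ) - c ^ 2) • 1 := by
    have h := RingQuot.mkAlgHom_rel ℂ (PolRel.rel (q := q))
    simpa [Pz, Pw, hZdef, hWdef, map_mul, map_add, map_smul, map_one] using h
  have h1mv : (1 : PolC q) - W * Z = (c ^ 2) • (1 - Z * W) := by
    rw [hrel]; module
  have huz : (1 - Z * W) * Z = (c ^ 2) • (Z * (1 - Z * W)) := by
    calc (1 - Z * W) * Z = Z - Z * (W * Z) := by
          rw [sub_mul, one_mul, mul_assoc]
      _ = Z - Z * ((c ^ 2) • (Z * W) + ((1 : ℂ) - c ^ 2) • 1) := by rw [hrel]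
      _ = (c ^ 2) • (Z * (1 - Z * W)) := by
          simp only [mul_add, mul_smul_comm, mul_one, mul_sub, mul_assoc]
          module
  have hu2z : (1 - Z * W) ^ 2 * Z = ((c ^ 2) * (c ^ 2)) • (Z * (1 - Z * W) ^ 2) := by
    calc (1 - Z * W) ^ 2 * Z = (1 - Z * W) * ((1 - Z * W) * Z) := by
          rw [pow_two, mul_assoc]
      _ = (c ^ 2) • ((1 - Z * W) * (Z * (1 - Z * W))) := by
          rw [huz, mul_smul_comm]
      _ = (c ^ 2) • (((1 - Z * W) * Z) * (1 - Z * W)) := by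
          rw [mul_assoc]
      _ = (c ^ 2) • (((c ^ 2) • (Z * (1 - Z * W))) * (1 - Z * W)) := by
          rw [huz]
      _ = ((c ^ 2) * (c ^ 2)) • (Z * (1 - Z * W) ^ 2) := by
          rw [smul_mul_assoc, smul_smul, mul_assoc, ← pow_two ((1 : PolC q) - Z * W)]
  -- the middle-factor identity
  have hWZ2 : W ^ 2 * Z ^ 2 =
      (c ^ 2) • ((W * Z) * (W * Z)) + ((1 : ℂ) - c ^ 2) • (W * Z) := by
    calc W ^ 2 * Z ^ 2 = W * (W * Z) * Z := by noncomm_ring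
      _ = W * ((c ^ 2) • (Z * W) + ((1 : ℂ) - c ^ 2) • 1) * Z := by rw [hrel]
      _ = _ := by
          simp only [mul_add, add_mul, mul_smul_comm, smul_mul_assoc, mul_one, one_mul,
            mul_assoc]
  have haux : ((c ^ 2) * (c ^ 2)) • ((1 - Z * W) ^ 2) =
      (1 : PolC q) - (W * Z + W * Z) + (W * Z) * (W * Z) := by
    calc ((c ^ 2) * (c ^ 2)) • ((1 - Z * W) ^ 2)
        = ((c ^ 2) • (1 - Z * W)) * ((c ^ 2) • (1 - Z * W)) := by
          rw [smul_mul_smul_comm, ← pow_two ((1 : PolC q) - Z * W)]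
      _ = (1 - W * Z) * (1 - W * Z) := by rw [← h1mv]
      _ = (1 : PolC q) - (W * Z + W * Z) + (W * Z) * (W * Z) := by
          simp only [mul_sub, sub_mul, one_mul, mul_one]
          abel
  have hM : (c ^ (-2 : ℤ)) •
      ((1 : PolC q) - ((1 : ℂ) + c ^ (-2 : ℤ)) • (W * Z) + (c ^ (-2 : ℤ)) • (W ^ 2 * Z ^ 2))
      = (c ^ 2) • ((1 - Z * W) ^ 2) := by
    have h2 : (c ^ 2) • ((1 - Z * W) ^ 2) =
        (c ^ (-2 : ℤ)) • (((c ^ 2) * (c ^ 2)) • ((1 - Z * W) ^ 2)) := by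
      rw [smul_smul]
      congr 1
      rw [hbinv]; field_simp
    rw [h2, haux, hWZ2]
    match_scalars
    all_goals simp only [hbinv]
    all_goals try field_simp
    all_goals try ring
  -- basic facts about d
  have hd1 : d (1 : PolC q) = 0 := by
    have h := hLeib 1 1
    rw [one_mul] at h
    have h1 := congrArg Prod.fst h
    have h2 := congrArg Prod.snd h
    simp only [map_one, one_mul, mul_one] at h1 h2
    refine Prod.ext ?_ ?_
    · simpa using left_eq_add.mp h1
    · simpa using left_eq_add.mp h2
  have hdalg : ∀ a : ℂ, d (algebraMap ℂ (PolC q) a) = 0 := by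
    intro a
    rw [Algebra.algebraMap_eq_smul_one, map_smul, hd1, smul_zero]
  -- subalgebras
  set Sz : Subalgebra ℂ (PolC q) := Algebra.adjoin ℂ {Z} with hSz
  set Sw : Subalgebra ℂ (PolC q) := Algebra.adjoin ℂ {W} with hSw
  have hZin : Z ∈ Sz := Algebra.subset_adjoin rfl
  have hWin : W ∈ Sw := Algebra.subset_adjoin rfl
  have hf₁ : f₁ ∈ Sz := Polynomial.aeval_mem_adjoin_singleton ℂ Z
  have hf₂ : f₂ ∈ Sw := Polynomial.aeval_mem_adjoin_singleton ℂ W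
  -- alg homs preserving Sz
  have hmapSz : ∀ (ψ : PolC q →ₐ[ℂ] PolC q), ψ Z ∈ Sz → ∀ g ∈ Sz, ψ g ∈ Sz := by
    intro ψ hψ g hg
    induction hg using Algebra.adjoin_induction with
    | mem x hx => rw [Set.mem_singleton_iff] at hx; subst hx; exact hψ
    | algebraMap a => rw [AlgHom.commutes]; exact Subalgebra.algebraMap_mem _ a
    | add x y hx hy ihx ihy => rw [map_add]; exact add_mem ihx ihy
    | mul x y hx hy ihx ihy => rw [map_mul]; exact mul_mem ihx ihy
  have hφSz : ∀ g ∈ Sz, φ g ∈ Sz := by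
    refine hmapSz φ ?_
    rw [hφz]; exact Subalgebra.smul_mem _ hZin _
  have hσSz : ∀ g ∈ Sz, σ g ∈ Sz := by
    refine hmapSz σ ?_
    rw [hσz]; exact Subalgebra.smul_mem _ hZin _
  -- d on Sz
  have hdSz : ∀ g ∈ Sz, (d g).2 = 0 ∧ (d g).1 ∈ Sz := by
    intro g hg
    induction hg using Algebra.adjoin_induction with
    | mem x hx =>
        rw [Set.mem_singleton_iff] at hx; subst hx
        rw [hdz]; exact ⟨rfl, Subalgebra.one_mem _⟩
    | algebraMap a => rw [hdalg]; exact ⟨rfl, Subalgebra.zero_mem _⟩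
    | add x y hx hy ihx ihy =>
        rw [map_add]
        exact ⟨by simp [ihx.1, ihy.1], add_mem ihx.2 ihy.2⟩
    | mul x y hx hy ihx ihy =>
        rw [hLeib x y]
        refine ⟨by simp [ihx.1, ihy.1], ?_⟩
        exact add_mem (mul_mem ihx.2 hy) (mul_mem (hφSz x hx) ihy.2)
  -- d on Sw
  have hdSw : ∀ g ∈ Sw, (d g).1 = 0 := by
    intro g hg
    induction hg using Algebra.adjoin_induction with
    | mem x hx =>
        rw [Set.mem_singleton_iff] at hx; subst hx
        rw [hdw]
    | algebraMap a => rw [hdalg]; rfl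
    | add x y hx hy ihx ihy => rw [map_add]; simp [ihx, ihy]
    | mul x y hx hy ihx ihy => rw [hLeib x y]; simp [ihx, ihy]
  -- σ ∘ φ = id on Sw
  have hσφ : ∀ g ∈ Sw, σ (φ g) = g := by
    intro g hg
    induction hg using Algebra.adjoin_induction with
    | mem x hx =>
        rw [Set.mem_singleton_iff] at hx; subst hx
        rw [hφw, map_smul, hσw, smul_smul]
        rw [hz2, hb, one_smul]
    | algebraMap a => rw [AlgHom.commutes, AlgHom.commutes]
    | add x y hx hy ihx ihy => rw [map_add, map_add, ihx, ihy]
    | mul x y hx hy ihx ihy => rw [map_mul, map_mul, ihx, ihy]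
  -- commutation of (1 - ZW)^2 past elements of Sz
  have hcomm : ∀ g ∈ Sz, σ (σ g) * (1 - Z * W) ^ 2 = (1 - Z * W) ^ 2 * g := by
    intro g hg
    induction hg using Algebra.adjoin_induction with
    | mem x hx =>
        rw [Set.mem_singleton_iff] at hx; subst hx
        rw [hσz, map_smul, hσz, smul_smul, hz2, hu2z, smul_mul_assoc]
    | algebraMap a =>
        rw [AlgHom.commutes, AlgHom.commutes, Algebra.commutes]
    | add x y hx hy ihx ihy =>
        rw [map_add, map_add, add_mul, mul_add, ihx, ihy]
    | mul x y hx hy ihx ihy =>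
        rw [map_mul, map_mul, mul_assoc, ihy, ← mul_assoc, ihx, mul_assoc]
  -- main computation
  set g₁ : PolC q := (d f₁).1 with hg₁
  have hg₁Sz : g₁ ∈ Sz := (hdSz f₁ hf₁).2
  have hstep1 : (d (f₂ * f₁)).1 = φ f₂ * g₁ := by
    rw [hLeib f₂ f₁]
    simp [hdSw f₂ hf₂]
    rfl
  have hstep2 : σ ((d (f₂ * f₁)).1) = f₂ * σ g₁ := by
    rw [hstep1, map_mul, hσφ f₂ hf₂]
  have hstep3 : (d (σ ((d (f₂ * f₁)).1))).2 = (d f₂).2 * σ g₁ := by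
    rw [hstep2, hLeib f₂ (σ g₁)]
    simp [(hdSz (σ g₁) (hσSz g₁ hg₁Sz)).1]
  calc (c ^ 2) • (σ ((d (σ ((d (f₂ * f₁)).1))).2) * (1 - Z * W) ^ 2)
      = (c ^ 2) • (σ ((d f₂).2) * (σ (σ g₁) * (1 - Z * W) ^ 2)) := by
        rw [hstep3, map_mul, mul_assoc]
    _ = σ ((d f₂).2) * ((c ^ 2) • ((1 - Z * W) ^ 2)) * g₁ := by
        rw [hcomm g₁ hg₁Sz]
        simp only [mul_smul_comm, smul_mul_assoc, mul_assoc]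
    _ = _ := by rw [← hM]
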